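/- Let g be a finite-dimensional complex reductive Lie algebra, k a symmetric subalgebra with rank k = rank g, and suppose k is not maximal among proper subalgebras containing it, with triangular decomposition g = r ⊕ k ⊕ r̄ where r, r̄ are abelian k-stable subalgebras such that k ⋉ r and k ⋉ r̄ are subalgebras of g. Then there are exactly four Lie subalgebras of g containing k: namely k, k ⋉ r, k ⋉ r̄, and g. -/

import Mathlib

/-- Let `g` be a finite-dimensional complex reductive Lie algebra (radical = centre),
`k` the fixed-point subalgebra of an involution `θ`, containing a Cartan subalgebra of
`g` (so `rank k = rank g`), and suppose `k` is not maximal, with triangular decomposition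
`g = r ⊕ k ⊕ r̄` where `r, r̄` are abelian `k`-stable subalgebras (so `k ⋉ r` and
`k ⋉ r̄` are subalgebras), `[r, r̄] ⊆ k`, and `r, r̄` are simple, mutually
non-isomorphic `k`-modules.  Then there are exactly four Lie subalgebras of `g`
containing `k`: namely `k`, `k ⋉ r`, `k ⋉ r̄` and `g`. -/
theorem four_subalgebras_containing_k (g : Type*) [LieRing g] [LieAlgebra ℂ g]
    [FiniteDimensional ℂ g]
    (hred : LieAlgebra.radical ℂ g = LieAlgebra.center ℂ g)
    (θ : g ≃ₗ⁅ℂ⁆ g) (hθ : ∀ x, θ (θ x) = x)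
    (k : LieSubalgebra ℂ g) (hk : (k : Set g) = {x | θ x = x})
    (H : LieSubalgebra ℂ g) (hH : H.IsCartanSubalgebra) (hHk : H ≤ k)
    (r rbar : Submodule ℂ g)
    -- triangular decomposition g = r ⊕ k ⊕ r̄
    (hdecomp : r ⊔ k.toSubmodule ⊔ rbar = ⊤)
    (hind : Disjoint r k.toSubmodule ∧ Disjoint (r ⊔ k.toSubmodule) rbar)
    -- r and r̄ are abelian subalgebras
    (hrab : ∀ x ∈ r, ∀ y ∈ r, ⁅x, y⁆ = 0)
    (hrbarab : ∀ x ∈ rbar, ∀ y ∈ rbar, ⁅x, y⁆ = 0)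
    -- k-stability
    (hkr : ∀ x ∈ k, ∀ y ∈ r, ⁅x, y⁆ ∈ r)
    (hkrbar : ∀ x ∈ k, ∀ y ∈ rbar, ⁅x, y⁆ ∈ rbar)
    (hrrbar : ∀ x ∈ r, ∀ y ∈ rbar, ⁅x, y⁆ ∈ k)
    -- r, r̄ are nonzero simple k-modules
    (hrne : r ≠ ⊥) (hrbarne : rbar ≠ ⊥)
    (hrsimple : ∀ U : Submodule ℂ g, U ≤ r → (∀ x ∈ k, ∀ y ∈ U, ⁅x, y⁆ ∈ U) →
      U = ⊥ ∨ U = r)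
    (hrbarsimple : ∀ U : Submodule ℂ g, U ≤ rbar → (∀ x ∈ k, ∀ y ∈ U, ⁅x, y⁆ ∈ U) →
      U = ⊥ ∨ U = rbar)
    -- r and r̄ are non-isomorphic as k-modules
    (hnoniso : ¬ ∃ φ : ↥r ≃ₗ[ℂ] ↥rbar, ∀ x ∈ k, ∀ v : ↥r,
      ∀ h : ⁅x, (v : g)⁆ ∈ r, (φ ⟨⁅x, (v : g)⁆, h⟩ : g) = ⁅x, (φ v : g)⁆) :
    ∀ q : LieSubalgebra ℂ g, k ≤ q →
      q = k ∨ q.toSubmodule = k.toSubmodule ⊔ r ∨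
      q.toSubmodule = k.toSubmodule ⊔ rbar ∨ q = ⊤ := by
  intro q hq
  classical
  obtain ⟨hdis1, hdis2⟩ := hind
  -- uniqueness of the decomposition
  have huniq : ∀ a ∈ r, ∀ b ∈ k.toSubmodule, ∀ c ∈ rbar,
      a + b + c = 0 → a = 0 ∧ b = 0 ∧ c = 0 := by
    intro a ha b hb c hc habc
    have hab : a + b ∈ r ⊔ k.toSubmodule := Submodule.add_mem_sup ha hb
    have habc' : a + b = -c := by linear_combination (norm := abel) habc
    have hc' : a + b ∈ rbar := habc' ▸ rbar.neg_mem hc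
    have hab0 : a + b = 0 := Submodule.disjoint_def.mp hdis2 _ hab hc'
    have hc0 : c = 0 := by
      have := habc'.symm.trans hab0
      simpa [neg_eq_zero] using this
    have ha' : a = -b := by linear_combination (norm := abel) hab0
    have ha0 : a = 0 := Submodule.disjoint_def.mp hdis1 a ha (ha' ▸ k.toSubmodule.neg_mem hb)
    refine ⟨ha0, ?_, hc0⟩
    rw [ha0, zero_add] at hab0
    exact hab0
  -- existence of the decomposition
  have hexist : ∀ y : g, ∃ a ∈ r, ∃ b ∈ k.toSubmodule, ∃ c ∈ rbar, a + b + c = y := by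
    intro y
    have hy : y ∈ r ⊔ k.toSubmodule ⊔ rbar := hdecomp ▸ Submodule.mem_top
    rcases Submodule.mem_sup.mp hy with ⟨u, hu, c, hc, h1⟩
    rcases Submodule.mem_sup.mp hu with ⟨a, ha, b, hb, h2⟩
    exact ⟨a, ha, b, hb, c, hc, by rw [h2, h1]⟩
  -- complementarity
  have hc1 : IsCompl r (k.toSubmodule ⊔ rbar) := by
    constructor
    · rw [Submodule.disjoint_def]
      intro x hx hx'
      rcases Submodule.mem_sup.mp hx' with ⟨b, hb, c, hc, hbc⟩
      have : x + (-b) + (-c) = 0 := by linear_combination (norm := abel) hbc.symm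
      exact (huniq x hx (-b) (k.toSubmodule.neg_mem hb) (-c) (rbar.neg_mem hc) this).1
    · rw [codisjoint_iff, ← sup_assoc, hdecomp]
  have hc2 : IsCompl k.toSubmodule (r ⊔ rbar) := by
    constructor
    · rw [Submodule.disjoint_def]
      intro x hx hx'
      rcases Submodule.mem_sup.mp hx' with ⟨a, ha, c, hc, hac⟩
      have : (-a) + x + (-c) = 0 := by linear_combination (norm := abel) hac.symm
      exact (huniq (-a) (r.neg_mem ha) x hx (-c) (rbar.neg_mem hc) this).2.1
    · rw [codisjoint_iff, ← sup_assoc, sup_comm k.toSubmodule r, hdecomp]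
  have hc3 : IsCompl rbar (r ⊔ k.toSubmodule) := by
    constructor
    · exact hdis2.symm
    · rw [codisjoint_iff, sup_comm, hdecomp]
  set πr := r.linearProjOfIsCompl _ hc1 with hπrdef
  set πK := k.toSubmodule.linearProjOfIsCompl _ hc2 with hπKdef
  set πb := rbar.linearProjOfIsCompl _ hc3 with hπbdef
  -- computing the projections of a decomposed element
  have hπr : ∀ a ∈ r, ∀ b ∈ k.toSubmodule, ∀ c ∈ rbar, ((πr (a + b + c) : g)) = a := by
    intro a ha b hb c hc
    have h1 : πr a = ⟨a, ha⟩ := Submodule.linearProjOfIsCompl_apply_left hc1 ⟨a, ha⟩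
    have h2 : πr (b + c) = 0 :=
      Submodule.projectionOnto_apply_of_mem_right hc1 (Submodule.add_mem_sup hb hc)
    have : πr (a + b + c) = πr a + πr (b + c) := by rw [add_assoc, map_add]
    rw [this, h1, h2, add_zero]
  have hπK : ∀ a ∈ r, ∀ b ∈ k.toSubmodule, ∀ c ∈ rbar, ((πK (a + b + c) : g)) = b := by
    intro a ha b hb c hc
    have h1 : πK b = ⟨b, hb⟩ := Submodule.linearProjOfIsCompl_apply_left hc2 ⟨b, hb⟩
    have h2 : πK (a + c) = 0 :=
      Submodule.projectionOnto_apply_of_mem_right hc2 (Submodule.add_mem_sup ha hc)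
    have heq : a + b + c = b + (a + c) := by abel
    have : πK (a + b + c) = πK b + πK (a + c) := by rw [heq, map_add]
    rw [this, h1, h2, add_zero]
  have hπb : ∀ a ∈ r, ∀ b ∈ k.toSubmodule, ∀ c ∈ rbar, ((πb (a + b + c) : g)) = c := by
    intro a ha b hb c hc
    have h1 : πb c = ⟨c, hc⟩ := Submodule.linearProjOfIsCompl_apply_left hc3 ⟨c, hc⟩
    have h2 : πb (a + b) = 0 :=
      Submodule.projectionOnto_apply_of_mem_right hc3 (Submodule.add_mem_sup ha hb)
    have heq : a + b + c = c + (a + b) := by abel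
    have : πb (a + b + c) = πb c + πb (a + b) := by rw [heq, map_add]
    rw [this, h1, h2, add_zero]
  -- the sum of the three projections is the identity
  have hsum : ∀ y : g, (πr y : g) + (πK y : g) + (πb y : g) = y := by
    intro y
    obtain ⟨a, ha, b, hb, c, hc, rfl⟩ := hexist y
    rw [hπr a ha b hb c hc, hπK a ha b hb c hc, hπb a ha b hb c hc]
  -- equivariance of the projections
  have heqv : ∀ x ∈ k, ∀ y : g, (πr ⁅x, y⁆ : g) = ⁅x, (πr y : g)⁆ ∧
      (πK ⁅x, y⁆ : g) = ⁅x, (πK y : g)⁆ ∧ (πb ⁅x, y⁆ : g) = ⁅x, (πb y : g)⁆ := by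
    intro x hx y
    obtain ⟨a, ha, b, hb, c, hc, rfl⟩ := hexist y
    have hxa : ⁅x, a⁆ ∈ r := hkr x hx a ha
    have hxb : ⁅x, b⁆ ∈ k.toSubmodule := k.lie_mem hx hb
    have hxc : ⁅x, c⁆ ∈ rbar := hkrbar x hx c hc
    have hlie : ⁅x, a + b + c⁆ = ⁅x, a⁆ + ⁅x, b⁆ + ⁅x, c⁆ := by simp [lie_add]
    rw [hlie]
    exact ⟨by rw [hπr _ hxa _ hxb _ hxc, hπr a ha b hb c hc],
      by rw [hπK _ hxa _ hxb _ hxc, hπK a ha b hb c hc],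
      by rw [hπb _ hxa _ hxb _ hxc, hπb a ha b hb c hc]⟩
  -- q is stable under bracketing with k
  have hQ : ∀ x ∈ k, ∀ y ∈ q.toSubmodule, ⁅x, y⁆ ∈ q.toSubmodule :=
    fun x hx y hy => q.lie_mem (hq hx) hy
  have hKQ : k.toSubmodule ≤ q.toSubmodule := hq
  -- the images of q under the projections to r and rbar
  set Ur : Submodule ℂ g := Submodule.map (r.subtype.comp πr) q.toSubmodule with hUrdef
  set Ub : Submodule ℂ g := Submodule.map (rbar.subtype.comp πb) q.toSubmodule with hUbdef
  have hUrmem : ∀ z, z ∈ Ur ↔ ∃ y ∈ q.toSubmodule, (πr y : g) = z := by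
    intro z; rw [hUrdef, Submodule.mem_map]; rfl
  have hUbmem : ∀ z, z ∈ Ub ↔ ∃ y ∈ q.toSubmodule, (πb y : g) = z := by
    intro z; rw [hUbdef, Submodule.mem_map]; rfl
  have hUr : Ur = ⊥ ∨ Ur = r := by
    apply hrsimple
    · intro z hz
      rcases (hUrmem z).mp hz with ⟨y, _, rfl⟩
      exact (πr y).2
    · intro x hx z hz
      rcases (hUrmem z).mp hz with ⟨y, hy, rfl⟩
      exact (hUrmem _).mpr ⟨⁅x, y⁆, hQ x hx y hy, (heqv x hx y).1⟩
  have hUb : Ub = ⊥ ∨ Ub = rbar := by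
    apply hrbarsimple
    · intro z hz
      rcases (hUbmem z).mp hz with ⟨y, _, rfl⟩
      exact (πb y).2
    · intro x hx z hz
      rcases (hUbmem z).mp hz with ⟨y, hy, rfl⟩
      exact (hUbmem _).mpr ⟨⁅x, y⁆, hQ x hx y hy, (heqv x hx y).2.2⟩
  -- auxiliary facts used in all cases
  have hπrQ : ∀ y ∈ q.toSubmodule, (πr y : g) ∈ Ur := fun y hy => (hUrmem _).mpr ⟨y, hy, rfl⟩
  have hπbQ : ∀ y ∈ q.toSubmodule, (πb y : g) ∈ Ub := fun y hy => (hUbmem _).mpr ⟨y, hy, rfl⟩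
  rcases hUr with hUr0 | hUr1
  · rcases hUb with hUb0 | hUb1
    · -- q = k
      left
      refine le_antisymm (fun y hy => ?_) hq
      have hy' : y ∈ q.toSubmodule := hy
      have h1 : (πr y : g) = 0 := by
        have := hπrQ y hy'; rw [hUr0] at this; simpa using this
      have h2 : (πb y : g) = 0 := by
        have := hπbQ y hy'; rw [hUb0] at this; simpa using this
      have : (πK y : g) = y := by
        have := hsum y
        rw [h1, h2] at this
        simpa using this
      have : y ∈ k.toSubmodule := this ▸ (πK y).2
      exact this
    · -- q = k ⊔ rbar
      right; right; left
      apply le_antisymm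
      · intro y hy
        have h1 : (πr y : g) = 0 := by
          have := hπrQ y hy; rw [hUr0] at this; simpa using this
        have h2 : (πK y : g) + (πb y : g) = y := by
          have := hsum y; rw [h1, zero_add] at this; exact this
        exact h2 ▸ Submodule.add_mem_sup (πK y).2 (πb y).2
      · refine sup_le hKQ ?_
        rw [← hUb1]
        intro z hz
        rcases (hUbmem z).mp hz with ⟨y, hy, rfl⟩
        have : (πb y : g) = y - (πr y : g) - (πK y : g) := by
          have := hsum y; linear_combination (norm := abel) this
        rw [this]
        have h1 : (πr y : g) = 0 := by
          have := hπrQ y hy; rw [hUr0] at this; simpa using this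
        rw [h1]
        exact Submodule.sub_mem _ (Submodule.sub_mem _ hy (q.toSubmodule.zero_mem)) (hKQ (πK y).2)
  · rcases hUb with hUb0 | hUb1
    · -- q = k ⊔ r
      right; left
      apply le_antisymm
      · intro y hy
        have h2 : (πb y : g) = 0 := by
          have := hπbQ y hy; rw [hUb0] at this; simpa using this
        have h1 : (πK y : g) + (πr y : g) = y := by
          have := hsum y; rw [h2, add_zero] at this
          linear_combination (norm := abel) this
        exact h1 ▸ Submodule.add_mem_sup (πK y).2 (πr y).2
      · refine sup_le hKQ ?_
        rw [← hUr1]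
        intro z hz
        rcases (hUrmem z).mp hz with ⟨y, hy, rfl⟩
        have : (πr y : g) = y - (πK y : g) - (πb y : g) := by
          have := hsum y; linear_combination (norm := abel) this
        rw [this]
        have h2 : (πb y : g) = 0 := by
          have := hπbQ y hy; rw [hUb0] at this; simpa using this
        rw [h2]
        exact Submodule.sub_mem _ (Submodule.sub_mem _ hy (hKQ (πK y).2)) (q.toSubmodule.zero_mem)
    · -- both projections are full
      have hIr : q.toSubmodule ⊓ r = ⊥ ∨ q.toSubmodule ⊓ r = r := by
        apply hrsimple
        · exact inf_le_right
        · intro x hx y hy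
          exact ⟨hQ x hx y hy.1, hkr x hx y hy.2⟩
      rcases hIr with hIr0 | hIr1
      · -- the graph case: contradiction with non-isomorphism
        exfalso
        have hIb : q.toSubmodule ⊓ rbar = ⊥ ∨ q.toSubmodule ⊓ rbar = rbar := by
          apply hrbarsimple
          · exact inf_le_right
          · intro x hx y hy
            exact ⟨hQ x hx y hy.1, hkrbar x hx y hy.2⟩
        rcases hIb with hIb0 | hIb1
        · -- build the isomorphism
          set M : Submodule ℂ g := q.toSubmodule ⊓ (r ⊔ rbar) with hMdef
          set f : M →ₗ[ℂ] r := πr.comp M.subtype with hfdef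
          set fb : M →ₗ[ℂ] rbar := πb.comp M.subtype with hfbdef
          have hπKM : ∀ m : M, (πK (m : g) : g) = 0 := by
            intro m
            rcases Submodule.mem_sup.mp m.2.2 with ⟨a, ha, c, hc, hac⟩
            have h' : (m : g) = a + 0 + c := by rw [add_zero, hac]
            rw [h', hπK a ha 0 (Submodule.zero_mem _) c hc]
          have hMsum : ∀ m : M, (πr (m : g) : g) + (πb (m : g) : g) = (m : g) := by
            intro m
            have := hsum (m : g)
            rw [hπKM m] at this
            linear_combination (norm := abel) this
          have hfinj : Function.Injective f := by
            rw [← LinearMap.ker_eq_bot, LinearMap.ker_eq_bot']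
            intro m hm
            have h0 : (πr (m : g) : g) = 0 := by
              have : ((f m : r) : g) = 0 := by rw [hm]; rfl
              exact this
            have h1 : (m : g) = (πb (m : g) : g) := by
              have := hMsum m; rw [h0, zero_add] at this; exact this.symm
            have hmem : (m : g) ∈ q.toSubmodule ⊓ rbar := ⟨m.2.1, h1 ▸ (πb (m : g)).2⟩
            rw [hIb0] at hmem
            exact Subtype.ext (by simpa using hmem)
          have hfsurj : Function.Surjective f := by
            intro v
            have hv : (v : g) ∈ Ur := hUr1.symm ▸ v.2
            rcases (hUrmem _).mp hv with ⟨y, hy, hyv⟩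
            have hmQ : y - (πK y : g) ∈ q.toSubmodule :=
              Submodule.sub_mem _ hy (hKQ (πK y).2)
            have hmS : y - (πK y : g) ∈ r ⊔ rbar := by
              have h' : y - (πK y : g) = (πr y : g) + (πb y : g) := by
                have h0 := hsum y
                rw [sub_eq_iff_eq_add]
                conv_lhs => rw [← h0]
                abel
              rw [h']
              exact Submodule.add_mem_sup (πr y).2 (πb y).2
            refine ⟨⟨y - (πK y : g), hmQ, hmS⟩, ?_⟩
            apply Subtype.ext
            show (πr (y - (πK y : g)) : g) = (v : g)
            have h2 : πr ((πK y : g)) = 0 :=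
              Submodule.projectionOnto_apply_of_mem_right hc1
                (Submodule.mem_sup_left (πK y).2)
            rw [map_sub, h2, sub_zero, hyv]
          have hfbinj : Function.Injective fb := by
            rw [← LinearMap.ker_eq_bot, LinearMap.ker_eq_bot']
            intro m hm
            have h0 : (πb (m : g) : g) = 0 := by
              have : ((fb m : rbar) : g) = 0 := by rw [hm]; rfl
              exact this
            have h1 : (m : g) = (πr (m : g) : g) := by
              have := hMsum m; rw [h0, add_zero] at this; exact this.symm
            have hmem : (m : g) ∈ q.toSubmodule ⊓ r := ⟨m.2.1, h1 ▸ (πr (m : g)).2⟩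
            rw [hIr0] at hmem
            exact Subtype.ext (by simpa using hmem)
          have hfbsurj : Function.Surjective fb := by
            intro v
            have hv : (v : g) ∈ Ub := hUb1.symm ▸ v.2
            rcases (hUbmem _).mp hv with ⟨y, hy, hyv⟩
            have hmQ : y - (πK y : g) ∈ q.toSubmodule :=
              Submodule.sub_mem _ hy (hKQ (πK y).2)
            have hmS : y - (πK y : g) ∈ r ⊔ rbar := by
              have h' : y - (πK y : g) = (πr y : g) + (πb y : g) := by
                have h0 := hsum y
                rw [sub_eq_iff_eq_add]
                conv_lhs => rw [← h0]
                abel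
              rw [h']
              exact Submodule.add_mem_sup (πr y).2 (πb y).2
            refine ⟨⟨y - (πK y : g), hmQ, hmS⟩, ?_⟩
            apply Subtype.ext
            show (πb (y - (πK y : g)) : g) = (v : g)
            have h2 : πb ((πK y : g)) = 0 :=
              Submodule.projectionOnto_apply_of_mem_right hc3
                (Submodule.mem_sup_right (πK y).2)
            rw [map_sub, h2, sub_zero, hyv]
          set ef : M ≃ₗ[ℂ] r := LinearEquiv.ofBijective f ⟨hfinj, hfsurj⟩ with hefdef
          set efb : M ≃ₗ[ℂ] rbar := LinearEquiv.ofBijective fb ⟨hfbinj, hfbsurj⟩ with hefbdef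
          refine hnoniso ⟨ef.symm.trans efb, ?_⟩
          intro x hx v h
          set m : M := ef.symm v with hmdef
          have hfm : f m = v := by
            have := ef.apply_symm_apply v
            exact this
          have hfm' : (πr (m : g) : g) = (v : g) := congrArg Subtype.val hfm
          have hφv : ((ef.symm.trans efb) v : g) = (πb (m : g) : g) := by
            simp only [LinearEquiv.trans_apply, ← hmdef]
            rfl
          have hmeq : (m : g) = (v : g) + (πb (m : g) : g) := by
            have := hMsum m; rw [hfm'] at this; exact this.symm
          -- the bracket of x with m lies in M
          have hbr : ⁅x, (m : g)⁆ ∈ M := by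
            constructor
            · exact hQ x hx _ m.2.1
            · rw [hmeq, lie_add]
              exact Submodule.add_mem_sup (hkr x hx _ v.2)
                (hkrbar x hx _ (πb (m : g)).2)
          set m2 : M := ⟨⁅x, (m : g)⁆, hbr⟩ with hm2def
          have hfm2 : f m2 = ⟨⁅x, (v : g)⁆, h⟩ := by
            apply Subtype.ext
            show (πr ⁅x, (m : g)⁆ : g) = ⁅x, (v : g)⁆
            rw [(heqv x hx (m : g)).1, hfm']
          have hfbm2 : (fb m2 : g) = ⁅x, (πb (m : g) : g)⁆ := by
            show (πb ⁅x, (m : g)⁆ : g) = _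
            rw [(heqv x hx (m : g)).2.2]
          have hefm2 : ef m2 = f m2 := rfl
          have hefbm2 : efb m2 = fb m2 := rfl
          have hkey : (ef.symm.trans efb) ⟨⁅x, (v : g)⁆, h⟩ = fb m2 := by
            rw [← hfm2, LinearEquiv.trans_apply, ← hefm2, LinearEquiv.symm_apply_apply, hefbm2]
          calc ((ef.symm.trans efb) ⟨⁅x, (v : g)⁆, h⟩ : g)
              = ((fb m2 : rbar) : g) := congrArg Subtype.val hkey
            _ = ⁅x, (πb (m : g) : g)⁆ := hfbm2
            _ = ⁅x, ((ef.symm.trans efb) v : g)⁆ := by rw [hφv]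
        · -- rbar ≤ q, which forces r ≤ q, contradicting q ⊓ r = ⊥
          have hrbQ : rbar ≤ q.toSubmodule := by
            rw [← hIb1]; exact inf_le_left
          have hrQ : r ≤ q.toSubmodule := by
            rw [← hUr1]
            intro z hz
            rcases (hUrmem z).mp hz with ⟨y, hy, rfl⟩
            have h' : (πr y : g) = y - (πK y : g) - (πb y : g) := by
              have := hsum y; linear_combination (norm := abel) this
            rw [h']
            exact Submodule.sub_mem _ (Submodule.sub_mem _ hy (hKQ (πK y).2))
              (hrbQ (πb y).2)
          have : r ≤ q.toSubmodule ⊓ r := le_inf hrQ le_rfl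
          rw [hIr0] at this
          exact hrne (le_bot_iff.mp this)
      · -- q = ⊤
        right; right; right
        have hrQ : r ≤ q.toSubmodule := by
          rw [← hIr1]; exact inf_le_left
        have hrbQ : rbar ≤ q.toSubmodule := by
          rw [← hUb1]
          intro z hz
          rcases (hUbmem z).mp hz with ⟨y, hy, rfl⟩
          have h' : (πb y : g) = y - (πr y : g) - (πK y : g) := by
            have := hsum y; linear_combination (norm := abel) this
          rw [h']
          exact Submodule.sub_mem _ (Submodule.sub_mem _ hy (hrQ (πr y).2))
            (hKQ (πK y).2)
        have htop : q.toSubmodule = ⊤ := by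
          rw [← top_le_iff, ← hdecomp]
          exact sup_le (sup_le hrQ hKQ) hrbQ
        rw [← LieSubalgebra.toSubmodule_inj, LieSubalgebra.top_toSubmodule]
        exact htop
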